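/- Robust policy gradient, almost-everywhere part: under Assumption 1 with Θ ⊆ ℝ^N open and convex, for every probability distribution ρ on S the function J_ρ is differentiable at Lebesgue-almost every θ ∈ Θ, and at every point θ of differentiability of J_ρ one has ∇J_ρ(θ) = ψ_ρ(θ) for every choice of maximizing state s_θ. -/

import Mathlib

set_option autoImplicit false

open Finset MeasureTheory

/-- The stochastic matrix of a policy `π` under the kernel `p`:
`P_π(s,s') = ∑ a, π(a|s)·p(s'|s,a)`. -/
noncomputable def pmat {S A : Type*} [Fintype A] (π : S → A → ℝ) (p : S → A → S → ℝ) :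
    Matrix S S ℝ :=
  Matrix.of fun s s' => ∑ a, π s a * p s a s'

/-- The discounted visitation distribution
`d^π_s(s') = (1-γ+γR)·∑_{t≥0} (γ(1-R))^t·(P_π^t)(s,s')`. -/
noncomputable def dvisit {S A : Type*} [Fintype S] [Fintype A] [DecidableEq S]
    (γ R : ℝ) (π : S → A → ℝ) (p : S → A → S → ℝ) (s s' : S) : ℝ :=
  (1 - γ + γ * R) * ∑' t : ℕ, (γ * (1 - R)) ^ t * ((pmat π p) ^ t) s s'

set_option linter.unusedSectionVars false

namespace StmtAux

variable {S : Type*} [Fintype S] [DecidableEq S] [Nonempty S]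

/-- Neumann series of a matrix, defined entrywise. -/
noncomputable def nmat (A : Matrix S S ℝ) : Matrix S S ℝ :=
  Matrix.of fun s s' => ∑' t : ℕ, (A ^ t) s s'

section

variable {A : Matrix S S ℝ} {g : ℝ}
  (h0 : ∀ s s', 0 ≤ A s s') (hrow : ∀ s, ∑ s', A s s' = g)

include h0 hrow in
lemma pow_nonneg_rowsum (t : ℕ) :
    (∀ s s', 0 ≤ (A ^ t) s s') ∧ (∀ s, ∑ s', (A ^ t) s s' = g ^ t) := by
  induction t with
  | zero =>
    refine ⟨fun s s' => ?_, fun s => ?_⟩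
    · simp only [pow_zero, Matrix.one_apply]
      positivity
    · simp [Matrix.one_apply]
  | succ n ih =>
    refine ⟨fun s s' => ?_, fun s => ?_⟩
    · rw [pow_succ, Matrix.mul_apply]
      exact Finset.sum_nonneg fun s'' _ => mul_nonneg (ih.1 s s'') (h0 s'' s')
    · simp only [pow_succ, Matrix.mul_apply]
      rw [Finset.sum_comm]
      calc ∑ s'' : S, ∑ s' : S, (A ^ n) s s'' * A s'' s'
          = ∑ s'' : S, (A ^ n) s s'' * g := by
            refine Finset.sum_congr rfl fun s'' _ => ?_
            rw [← Finset.mul_sum, hrow]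
        _ = g ^ n * g := by rw [← Finset.sum_mul, ih.2]
        _ = g ^ (n + 1) := by ring

include h0 hrow in
lemma g_nonneg : 0 ≤ g := by
  obtain ⟨s⟩ := (inferInstance : Nonempty S)
  rw [← hrow s]
  exact Finset.sum_nonneg fun s' _ => h0 s s'

include h0 hrow in
lemma pow_entry_le (t : ℕ) (s s' : S) : (A ^ t) s s' ≤ g ^ t := by
  rw [← (pow_nonneg_rowsum h0 hrow t).2 s]
  exact Finset.single_le_sum (f := fun s' => (A ^ t) s s')
    (fun i _ => (pow_nonneg_rowsum h0 hrow t).1 s i) (Finset.mem_univ s')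

include h0 hrow in
lemma summable_pow_entry (hg : g < 1) (s s' : S) :
    Summable fun t : ℕ => (A ^ t) s s' := by
  refine Summable.of_nonneg_of_le (fun t => (pow_nonneg_rowsum h0 hrow t).1 s s')
    (fun t => pow_entry_le h0 hrow t s s') ?_
  exact summable_geometric_of_lt_one (g_nonneg h0 hrow) hg

include h0 hrow in
lemma nmat_nonneg (s s' : S) : 0 ≤ nmat A s s' :=
  tsum_nonneg fun t => (pow_nonneg_rowsum h0 hrow t).1 s s'

include h0 hrow in
lemma nmat_le (hg : g < 1) (s s' : S) : nmat A s s' ≤ (1 - g)⁻¹ := by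
  have := tsum_geometric_of_lt_one (g_nonneg h0 hrow) hg
  calc nmat A s s' ≤ ∑' t : ℕ, g ^ t := by
        refine Summable.tsum_le_tsum (fun t => pow_entry_le h0 hrow t s s')
          (summable_pow_entry h0 hrow hg s s') (summable_geometric_of_lt_one (g_nonneg h0 hrow) hg)
    _ = (1 - g)⁻¹ := this

include h0 hrow in
lemma nmat_rowsum (hg : g < 1) (s : S) : ∑ s', nmat A s s' = (1 - g)⁻¹ := by
  have hsum : ∀ s' ∈ Finset.univ, Summable fun t : ℕ => (A ^ t) s s' :=
    fun s' _ => summable_pow_entry h0 hrow hg s s'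
  calc ∑ s', nmat A s s' = ∑' t : ℕ, ∑ s', (A ^ t) s s' := (Summable.tsum_finsetSum hsum).symm
    _ = ∑' t : ℕ, g ^ t := by
        refine tsum_congr fun t => (pow_nonneg_rowsum h0 hrow t).2 s
    _ = (1 - g)⁻¹ := tsum_geometric_of_lt_one (g_nonneg h0 hrow) hg

include h0 hrow in
lemma nmat_eq_add_mul (hg : g < 1) : nmat A = 1 + A * nmat A := by
  ext s s'
  have hsum : ∀ x, Summable fun t : ℕ => (A ^ t) x s' :=
    fun x => summable_pow_entry h0 hrow hg x s'
  have h1 : (A * nmat A) s s' = ∑' t : ℕ, (A ^ (t + 1)) s s' := by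
    rw [Matrix.mul_apply]
    have hs2 : ∀ s'' ∈ Finset.univ, Summable fun t : ℕ => A s s'' * (A ^ t) s'' s' :=
      fun s'' _ => (hsum s'').mul_left _
    calc ∑ s'', A s s'' * nmat A s'' s'
        = ∑ s'', ∑' t : ℕ, A s s'' * (A ^ t) s'' s' := by
          refine Finset.sum_congr rfl fun s'' _ => ?_
          simp only [nmat, Matrix.of_apply]
          exact (tsum_mul_left).symm
      _ = ∑' t : ℕ, ∑ s'', A s s'' * (A ^ t) s'' s' := (Summable.tsum_finsetSum hs2).symm
      _ = ∑' t : ℕ, (A ^ (t + 1)) s s' := by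
          refine tsum_congr fun t => ?_
          rw [pow_succ', Matrix.mul_apply]
  have h2 : nmat A s s' = (A ^ 0) s s' + ∑' t : ℕ, (A ^ (t + 1)) s s' := by
    exact Summable.tsum_eq_zero_add (hsum s)
  simp only [Matrix.add_apply, nmat, Matrix.of_apply] at *
  rw [h2, h1, pow_zero]

include h0 hrow in
lemma nmat_eq_add_mul' (hg : g < 1) : nmat A = 1 + nmat A * A := by
  ext s s'
  have hsum : ∀ s'' x, Summable fun t : ℕ => (A ^ t) s'' x :=
    fun s'' x => summable_pow_entry h0 hrow hg s'' x
  have h1 : (nmat A * A) s s' = ∑' t : ℕ, (A ^ (t + 1)) s s' := by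
    rw [Matrix.mul_apply]
    have hs2 : ∀ s'' ∈ Finset.univ, Summable fun t : ℕ => (A ^ t) s s'' * A s'' s' :=
      fun s'' _ => (hsum s s'').mul_right _
    calc ∑ s'', nmat A s s'' * A s'' s'
        = ∑ s'', ∑' t : ℕ, (A ^ t) s s'' * A s'' s' := by
          refine Finset.sum_congr rfl fun s'' _ => ?_
          simp only [nmat, Matrix.of_apply]
          exact (tsum_mul_right).symm
      _ = ∑' t : ℕ, ∑ s'', (A ^ t) s s'' * A s'' s' := (Summable.tsum_finsetSum hs2).symm
      _ = ∑' t : ℕ, (A ^ (t + 1)) s s' := by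
          refine tsum_congr fun t => ?_
          rw [pow_succ, Matrix.mul_apply]
  have h2 : nmat A s s' = (A ^ 0) s s' + ∑' t : ℕ, (A ^ (t + 1)) s s' :=
    Summable.tsum_eq_zero_add (hsum s s')
  simp only [Matrix.add_apply, nmat, Matrix.of_apply] at *
  rw [h2, h1, pow_zero]

include h0 hrow in
lemma one_sub_mul_nmat (hg : g < 1) : (1 - A) * nmat A = 1 := by
  have h := nmat_eq_add_mul h0 hrow hg
  rw [Matrix.sub_mul, Matrix.one_mul]
  nth_rewrite 1 [h]
  abel

include h0 hrow in
lemma nmat_mul_one_sub (hg : g < 1) : nmat A * (1 - A) = 1 := by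
  have h := nmat_eq_add_mul' h0 hrow hg
  rw [Matrix.mul_sub, Matrix.mul_one]
  nth_rewrite 1 [h]
  abel

include h0 hrow in
lemma eq_nmat (hg : g < 1) {X : Matrix S S ℝ} (hX : (1 - A) * X = 1) : X = nmat A := by
  calc X = (nmat A * (1 - A)) * X := by rw [nmat_mul_one_sub h0 hrow hg, Matrix.one_mul]
    _ = nmat A * ((1 - A) * X) := Matrix.mul_assoc _ _ _
    _ = nmat A := by rw [hX, Matrix.mul_one]

include h0 hrow in
lemma nmat_solve (hg : g < 1) {v cvec : S → ℝ} (hv : (1 - A).mulVec v = cvec) :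
    v = (nmat A).mulVec cvec := by
  rw [← hv, Matrix.mulVec_mulVec, nmat_mul_one_sub h0 hrow hg, Matrix.one_mulVec]

end

end StmtAux

open scoped RealInnerProductSpace

namespace StmtAux

lemma abs_sup'_sub_sup'_le {S : Type*} [Fintype S] [Nonempty S] (f g : S → ℝ) (M : ℝ)
    (h : ∀ s, |f s - g s| ≤ M) :
    |Finset.univ.sup' Finset.univ_nonempty f - Finset.univ.sup' Finset.univ_nonempty g| ≤ M := by
  have key : ∀ f g : S → ℝ, (∀ s, |f s - g s| ≤ M) →
      Finset.univ.sup' Finset.univ_nonempty f ≤ Finset.univ.sup' Finset.univ_nonempty g + M := by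
    intro f g h
    refine Finset.sup'_le _ _ fun s _ => ?_
    have h1 : f s ≤ g s + M := by have := h s; rw [abs_le] at this; linarith
    exact h1.trans (by
      have := Finset.le_sup' g (Finset.mem_univ s)
      linarith)
  have h1 := key f g h
  have h2 := key g f (fun s => by rw [abs_sub_comm]; exact h s)
  rw [abs_le]
  constructor <;> linarith

lemma abs_mul_apply_le {S : Type*} [Fintype S] (X Y : Matrix S S ℝ) (bX bY : ℝ)
    (hX : ∀ s s', |X s s'| ≤ bX) (hY : ∀ s s', |Y s s'| ≤ bY) (s s' : S) :
    |(X * Y) s s'| ≤ Fintype.card S * bX * bY := by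
  have hbX : 0 ≤ bX := le_trans (abs_nonneg _) (hX s s')
  have hbY : 0 ≤ bY := le_trans (abs_nonneg _) (hY s s')
  rw [Matrix.mul_apply]
  calc |∑ u, X s u * Y u s'| ≤ ∑ u, |X s u * Y u s'| := Finset.abs_sum_le_sum_abs _ _
    _ ≤ ∑ _u : S, bX * bY := by
        refine Finset.sum_le_sum fun u _ => ?_
        rw [abs_mul]
        exact mul_le_mul (hX s u) (hY u s') (abs_nonneg _) hbX
    _ = Fintype.card S * bX * bY := by
        rw [Finset.sum_const, Finset.card_univ]
        push_cast
        ring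

lemma mulVec_apply {S : Type*} [Fintype S] (M : Matrix S S ℝ) (v : S → ℝ) (s : S) :
    (M.mulVec v) s = ∑ s', M s s' * v s' := by
  simp [Matrix.mulVec, dotProduct]

lemma one_sub_mulVec {S : Type*} [Fintype S] [DecidableEq S] (A : Matrix S S ℝ) (v : S → ℝ)
    (s : S) : ((1 - A).mulVec v) s = v s - ∑ s', A s s' * v s' := by
  simp only [Matrix.mulVec, dotProduct, Matrix.sub_apply, Matrix.one_apply, sub_mul,
    Finset.sum_sub_distrib, ite_mul, one_mul, zero_mul]
  rw [Finset.sum_ite_eq Finset.univ s v]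
  simp

end StmtAux

set_option maxHeartbeats 2000000 in
/-- **Robust policy gradient, almost-everywhere part (Theorem 1(1))**: under Assumption 1 with
`Θ ⊆ ℝ^N` open and convex, for every distribution `ρ` on `S`, the robust objective `J_ρ` is
differentiable at Lebesgue-almost every `θ ∈ Θ`, and at every `θ ∈ Θ` where `J_ρ` is
differentiable its gradient equals `ψ_ρ(θ)`, for every choice of maximizing state `s_θ`. -/
theorem stmt_7 {S A : Type*} [Fintype S] [Fintype A] [Nonempty S] [Nonempty A] [DecidableEq S]
    {N : ℕ}
    (c : S → A → ℝ) (hc : ∀ s a, c s a ∈ Set.Icc (0 : ℝ) 1)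
    (γ : ℝ) (hγ : γ ∈ Set.Ico (0 : ℝ) 1)
    (R : ℝ) (hR : R ∈ Set.Icc (0 : ℝ) 1)
    (p : S → A → S → ℝ) (hp : ∀ s a, p s a ∈ stdSimplex ℝ S)
    (Θ : Set (EuclideanSpace ℝ (Fin N))) (hΘo : IsOpen Θ) (hΘ : Convex ℝ Θ)
    (π : EuclideanSpace ℝ (Fin N) → S → A → ℝ)
    (hπ : ∀ θ ∈ Θ, ∀ s, π θ s ∈ stdSimplex ℝ A)
    (kπ : ℝ) (hkπ : 0 < kπ)
    (D : EuclideanSpace ℝ (Fin N) → S → A → EuclideanSpace ℝ (Fin N))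
    (hD : ∀ θ ∈ Θ, ∀ s a, HasGradientAt (fun θ' => π θ' s a) (D θ s a) θ)
    (hDb : ∀ θ ∈ Θ, ∀ s a, ‖D θ s a‖ ≤ kπ)
    (V : EuclideanSpace ℝ (Fin N) → S → ℝ)
    (hV : ∀ θ ∈ Θ, ∀ s, V θ s = ∑ a, π θ s a * (c s a
      + γ * (1 - R) * ∑ s', p s a s' * V θ s'
      + γ * R * univ.sup' univ_nonempty (V θ)))
    (Q : EuclideanSpace ℝ (Fin N) → S → A → ℝ)
    (hQ : ∀ θ ∈ Θ, ∀ s a, Q θ s a = c s a + γ * (1 - R) * ∑ s', p s a s' * V θ s'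
      + γ * R * univ.sup' univ_nonempty (V θ))
    (ρ : S → ℝ) (hρ : ρ ∈ stdSimplex ℝ S)
    (J : EuclideanSpace ℝ (Fin N) → ℝ) (hJ : ∀ θ, J θ = ∑ s, ρ s * V θ s) :
    (∀ᵐ θ ∂(volume : Measure (EuclideanSpace ℝ (Fin N))), θ ∈ Θ → DifferentiableAt ℝ J θ) ∧
      ∀ θ ∈ Θ, DifferentiableAt ℝ J θ → ∀ sθ : S, (∀ s, V θ s ≤ V θ sθ) →
        gradient J θ =
          (γ * R / ((1 - γ) * (1 - γ + γ * R))) •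
              ∑ s, ∑ a, (dvisit γ R (π θ) p sθ s * Q θ s a) • D θ s a
            + (1 / (1 - γ + γ * R)) •
              ∑ s, ∑ a, ((∑ s₀, ρ s₀ * dvisit γ R (π θ) p s₀ s) * Q θ s a) • D θ s a := by
  classical
  obtain ⟨hγ0, hγ1⟩ := hγ
  obtain ⟨hR0, hR1⟩ := hR
  set β : ℝ := γ * (1 - R) with hβdef
  have hβ0 : 0 ≤ β := mul_nonneg hγ0 (by linarith)
  have hβγ : β ≤ γ := by
    have : γ * (1 - R) ≤ γ * 1 := mul_le_mul_of_nonneg_left (by linarith) hγ0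
    simpa using this
  have hβ1 : β < 1 := lt_of_le_of_lt hβγ hγ1
  have hγR0 : 0 ≤ γ * R := mul_nonneg hγ0 hR0
  have h1γ : (0:ℝ) < 1 - γ := by linarith
  have h1β : (0:ℝ) < 1 - β := by linarith
  have hβR : β + γ * R = γ := by ring
  have hπ0 : ∀ θ' ∈ Θ, ∀ s a, 0 ≤ π θ' s a := fun θ' h s a => (hπ θ' h s).1 a
  have hπ1 : ∀ θ' ∈ Θ, ∀ s, ∑ a, π θ' s a = 1 := fun θ' h s => (hπ θ' h s).2
  have hp0 : ∀ s a s', 0 ≤ p s a s' := fun s a s' => (hp s a).1 s'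
  have hp1 : ∀ s a, ∑ s', p s a s' = 1 := fun s a => (hp s a).2
  have hρ0 : ∀ s, 0 ≤ ρ s := fun s => hρ.1 s
  have hρ1 : ∑ s, ρ s = 1 := hρ.2
  -- value function bounds
  have hVb : ∀ θ' ∈ Θ, ∀ s, 0 ≤ V θ' s ∧ V θ' s ≤ (1 - γ)⁻¹ := by
    intro θ' hθ'
    set m : ℝ := univ.sup' univ_nonempty (V θ') with hm
    set m0 : ℝ := univ.inf' univ_nonempty (V θ') with hm0
    obtain ⟨sm, _, hsm⟩ := Finset.exists_mem_eq_sup' univ_nonempty (V θ')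
    obtain ⟨s0, _, hs0⟩ := Finset.exists_mem_eq_inf' univ_nonempty (V θ')
    have hle : ∀ s, V θ' s ≤ m := fun s => Finset.le_sup' _ (Finset.mem_univ s)
    have hge : ∀ s, m0 ≤ V θ' s := fun s => Finset.inf'_le _ (Finset.mem_univ s)
    have hpVle : ∀ s a, ∑ s', p s a s' * V θ' s' ≤ m := by
      intro s a
      calc ∑ s', p s a s' * V θ' s' ≤ ∑ s', p s a s' * m :=
            Finset.sum_le_sum fun s' _ => mul_le_mul_of_nonneg_left (hle s') (hp0 s a s')
        _ = m := by rw [← Finset.sum_mul, hp1, one_mul]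
    have hpVge : ∀ s a, m0 ≤ ∑ s', p s a s' * V θ' s' := by
      intro s a
      calc m0 = ∑ s', p s a s' * m0 := by rw [← Finset.sum_mul, hp1, one_mul]
        _ ≤ ∑ s', p s a s' * V θ' s' :=
            Finset.sum_le_sum fun s' _ => mul_le_mul_of_nonneg_left (hge s') (hp0 s a s')
    have hmm0 : m0 ≤ m := le_trans (hge sm) (hsm ▸ le_rfl)
    have hupper : m ≤ 1 + γ * m := by
      have h1 : V θ' sm ≤ ∑ a, π θ' sm a * (1 + β * m + γ * R * m) := by
        rw [hV θ' hθ' sm]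
        refine Finset.sum_le_sum fun a _ => mul_le_mul_of_nonneg_left ?_ (hπ0 θ' hθ' sm a)
        have h2 := (hc sm a).2
        have h3 := mul_le_mul_of_nonneg_left (hpVle sm a) hβ0
        have h4 : γ * R * univ.sup' univ_nonempty (V θ') = γ * R * m := by rw [← hm]
        rw [h4]
        linarith
      have h5 : ∑ a, π θ' sm a * (1 + β * m + γ * R * m) = 1 + β * m + γ * R * m := by
        rw [← Finset.sum_mul, hπ1 θ' hθ', one_mul]
      rw [← hsm] at h1
      rw [h5] at h1
      nlinarith [hβR]
    have hlower : γ * m0 ≤ m0 := by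
      have h1 : ∑ a, π θ' s0 a * (0 + β * m0 + γ * R * m0) ≤ V θ' s0 := by
        rw [hV θ' hθ' s0]
        refine Finset.sum_le_sum fun a _ => mul_le_mul_of_nonneg_left ?_ (hπ0 θ' hθ' s0 a)
        have h2 := (hc s0 a).1
        have h3 := mul_le_mul_of_nonneg_left (hpVge s0 a) hβ0
        have h4 : γ * R * m0 ≤ γ * R * univ.sup' univ_nonempty (V θ') := by
          rw [← hm]
          exact mul_le_mul_of_nonneg_left (hmm0.trans le_rfl) hγR0
        linarith
      have h5 : ∑ a, π θ' s0 a * (0 + β * m0 + γ * R * m0) = β * m0 + γ * R * m0 := by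
        rw [← Finset.sum_mul, hπ1 θ' hθ', one_mul]
        ring
      rw [← hs0] at h1
      rw [h5] at h1
      nlinarith [hβR]
    have hm0nn : 0 ≤ m0 := by nlinarith
    have hmub : m ≤ (1 - γ)⁻¹ := by
      have key : m * (1 - γ) ≤ 1 := by nlinarith
      calc m = m * (1 - γ) * (1 - γ)⁻¹ := by field_simp
        _ ≤ 1 * (1 - γ)⁻¹ := mul_le_mul_of_nonneg_right key (by positivity)
        _ = (1 - γ)⁻¹ := one_mul _
    exact fun s => ⟨le_trans hm0nn (hge s), le_trans (hle s) hmub⟩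
  -- Lipschitz continuity of π on Θ
  have hπLip : ∀ s a, ∀ θ₁ ∈ Θ, ∀ θ₂ ∈ Θ, |π θ₁ s a - π θ₂ s a| ≤ kπ * ‖θ₁ - θ₂‖ := by
    intro s a θ₁ hθ₁ θ₂ hθ₂
    have key := Convex.norm_image_sub_le_of_norm_hasFDerivWithin_le
      (f := fun θ' => π θ' s a)
      (f' := fun x => (InnerProductSpace.toDual ℝ (EuclideanSpace ℝ (Fin N))) (D x s a))
      (s := Θ) (C := kπ)
      (fun x hx => ((hD x hx s a).hasFDerivAt).hasFDerivWithinAt)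
      (fun x hx => by
        rw [LinearIsometryEquiv.norm_map]
        exact hDb x hx s a)
      hΘ hθ₂ hθ₁
    rw [Real.norm_eq_abs] at key
    exact key
  -- Lipschitz continuity of V on Θ
  set L : ℝ := (Fintype.card A * kπ * (1 - γ)⁻¹) * (1 - γ)⁻¹ with hLdef
  have hL0 : 0 ≤ L := by positivity
  have hVLip : ∀ θ₁ ∈ Θ, ∀ θ₂ ∈ Θ, ∀ s, |V θ₁ s - V θ₂ s| ≤ L * ‖θ₁ - θ₂‖ := by
    intro θ₁ hθ₁ θ₂ hθ₂
    set Δ : ℝ := univ.sup' univ_nonempty (fun s => |V θ₁ s - V θ₂ s|) with hΔdef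
    have hΔle : ∀ s, |V θ₁ s - V θ₂ s| ≤ Δ :=
      fun s => Finset.le_sup' (fun s => |V θ₁ s - V θ₂ s|) (Finset.mem_univ s)
    have hΔ0 : 0 ≤ Δ := le_trans (abs_nonneg _) (hΔle (Classical.arbitrary S))
    set m₁ : ℝ := univ.sup' univ_nonempty (V θ₁) with hm₁
    set m₂ : ℝ := univ.sup' univ_nonempty (V θ₂) with hm₂
    have hmdiff : |m₁ - m₂| ≤ Δ := StmtAux.abs_sup'_sub_sup'_le (V θ₁) (V θ₂) Δ hΔle
    have hqbound : ∀ s a,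
        |c s a + β * ∑ s', p s a s' * V θ₁ s' + γ * R * m₁| ≤ (1 - γ)⁻¹ := by
      intro s a
      have hpV : 0 ≤ ∑ s', p s a s' * V θ₁ s' ∧ (∑ s', p s a s' * V θ₁ s') ≤ (1 - γ)⁻¹ := by
        constructor
        · exact Finset.sum_nonneg fun s' _ => mul_nonneg (hp0 s a s') (hVb θ₁ hθ₁ s').1
        · calc ∑ s', p s a s' * V θ₁ s' ≤ ∑ s', p s a s' * (1 - γ)⁻¹ :=
              Finset.sum_le_sum fun s' _ =>
                mul_le_mul_of_nonneg_left (hVb θ₁ hθ₁ s').2 (hp0 s a s')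
            _ = (1 - γ)⁻¹ := by rw [← Finset.sum_mul, hp1, one_mul]
      have hm₁b : 0 ≤ m₁ ∧ m₁ ≤ (1 - γ)⁻¹ := by
        obtain ⟨sm, _, hsm⟩ := Finset.exists_mem_eq_sup' (univ_nonempty) (V θ₁)
        rw [hm₁, hsm]
        exact hVb θ₁ hθ₁ sm
      have hca := hc s a
      have hkey : (1:ℝ) + β * (1 - γ)⁻¹ + γ * R * (1 - γ)⁻¹ = (1 - γ)⁻¹ := by
        have hfe : (1:ℝ) + γ * (1 - γ)⁻¹ = (1 - γ)⁻¹ := by field_simp; ring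
        linear_combination hfe + (1 - γ)⁻¹ * hβR
      have hinv0 : (0:ℝ) ≤ (1 - γ)⁻¹ := by positivity
      rw [abs_le]
      constructor
      · have hx1 := mul_nonneg hβ0 hpV.1
        have hx2 := mul_nonneg hγR0 hm₁b.1
        linarith [hca.1]
      · have h1 := mul_le_mul_of_nonneg_left hpV.2 hβ0
        have h2 := mul_le_mul_of_nonneg_left hm₁b.2 hγR0
        linarith [hca.2, hkey.le]
    have hstep : ∀ s, |V θ₁ s - V θ₂ s| ≤
        (Fintype.card A * kπ * (1 - γ)⁻¹) * ‖θ₁ - θ₂‖ + γ * Δ := by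
      intro s
      have e1 := hV θ₁ hθ₁ s
      have e2 := hV θ₂ hθ₂ s
      set q₁ : A → ℝ := fun a => c s a + β * ∑ s', p s a s' * V θ₁ s' + γ * R * m₁ with hq₁
      set q₂ : A → ℝ := fun a => c s a + β * ∑ s', p s a s' * V θ₂ s' + γ * R * m₂ with hq₂
      have hdiff : V θ₁ s - V θ₂ s =
          ∑ a, (π θ₁ s a - π θ₂ s a) * q₁ a + ∑ a, π θ₂ s a * (q₁ a - q₂ a) := by
        rw [e1, e2]
        rw [← Finset.sum_add_distrib]
        refine (Finset.sum_sub_distrib _ _).symm.trans ?_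
        refine Finset.sum_congr rfl fun a _ => ?_
        simp only [hq₁, hq₂]
        ring
      have hqd : ∀ a, |q₁ a - q₂ a| ≤ γ * Δ := by
        intro a
        have hpd : |∑ s', p s a s' * V θ₁ s' - ∑ s', p s a s' * V θ₂ s'| ≤ Δ := by
          rw [← Finset.sum_sub_distrib]
          calc |∑ s', (p s a s' * V θ₁ s' - p s a s' * V θ₂ s')|
              ≤ ∑ s', |p s a s' * V θ₁ s' - p s a s' * V θ₂ s'| :=
                Finset.abs_sum_le_sum_abs _ _
            _ = ∑ s', p s a s' * |V θ₁ s' - V θ₂ s'| := by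
                refine Finset.sum_congr rfl fun s' _ => ?_
                rw [← mul_sub, abs_mul, abs_of_nonneg (hp0 s a s')]
            _ ≤ ∑ s', p s a s' * Δ :=
                Finset.sum_le_sum fun s' _ =>
                  mul_le_mul_of_nonneg_left (hΔle s') (hp0 s a s')
            _ = Δ := by rw [← Finset.sum_mul, hp1, one_mul]
        have : q₁ a - q₂ a =
            β * (∑ s', p s a s' * V θ₁ s' - ∑ s', p s a s' * V θ₂ s')
              + γ * R * (m₁ - m₂) := by
          simp only [hq₁, hq₂]; ring
        rw [this]
        calc |β * (∑ s', p s a s' * V θ₁ s' - ∑ s', p s a s' * V θ₂ s') + γ * R * (m₁ - m₂)|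
            ≤ |β * (∑ s', p s a s' * V θ₁ s' - ∑ s', p s a s' * V θ₂ s')|
              + |γ * R * (m₁ - m₂)| := abs_add_le _ _
          _ ≤ β * Δ + γ * R * Δ := by
              have e1 : |β * (∑ s', p s a s' * V θ₁ s' - ∑ s', p s a s' * V θ₂ s')|
                  = β * |∑ s', p s a s' * V θ₁ s' - ∑ s', p s a s' * V θ₂ s'| := by
                rw [abs_mul, abs_of_nonneg hβ0]
              have e2 : |γ * R * (m₁ - m₂)| = γ * R * |m₁ - m₂| := by
                rw [abs_mul, abs_of_nonneg hγR0]
              rw [e1, e2]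
              exact add_le_add (mul_le_mul_of_nonneg_left hpd hβ0)
                (mul_le_mul_of_nonneg_left hmdiff hγR0)
          _ = γ * Δ := by rw [← add_mul, hβR]
      calc |V θ₁ s - V θ₂ s|
          ≤ |∑ a, (π θ₁ s a - π θ₂ s a) * q₁ a| + |∑ a, π θ₂ s a * (q₁ a - q₂ a)| := by
            rw [hdiff]; exact abs_add_le _ _
        _ ≤ (∑ a, (kπ * ‖θ₁ - θ₂‖) * (1 - γ)⁻¹) + ∑ a, π θ₂ s a * (γ * Δ) := by
            refine add_le_add ?_ ?_
            · refine le_trans (Finset.abs_sum_le_sum_abs _ _) (Finset.sum_le_sum fun a _ => ?_)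
              rw [abs_mul]
              exact mul_le_mul (hπLip s a θ₁ hθ₁ θ₂ hθ₂) (hqbound s a) (abs_nonneg _)
                (by positivity)
            · refine le_trans (Finset.abs_sum_le_sum_abs _ _) (Finset.sum_le_sum fun a _ => ?_)
              rw [abs_mul, abs_of_nonneg (hπ0 θ₂ hθ₂ s a)]
              exact mul_le_mul_of_nonneg_left (hqd a) (hπ0 θ₂ hθ₂ s a)
        _ = (Fintype.card A * kπ * (1 - γ)⁻¹) * ‖θ₁ - θ₂‖ + γ * Δ := by
            rw [Finset.sum_const, Finset.card_univ, ← Finset.sum_mul, hπ1 θ₂ hθ₂, one_mul]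
            push_cast
            ring
    have hΔbound : Δ ≤ L * ‖θ₁ - θ₂‖ := by
      obtain ⟨sd, _, hsd⟩ := Finset.exists_mem_eq_sup' (univ_nonempty)
        (fun s => |V θ₁ s - V θ₂ s|)
      have hΔeq : Δ = |V θ₁ sd - V θ₂ sd| := by rw [hΔdef, hsd]
      have h1 : Δ ≤ (Fintype.card A * kπ * (1 - γ)⁻¹) * ‖θ₁ - θ₂‖ + γ * Δ := by
        have h2 := hstep sd
        rw [← hΔeq] at h2
        exact h2
      have h2 : Δ * (1 - γ) ≤ (Fintype.card A * kπ * (1 - γ)⁻¹) * ‖θ₁ - θ₂‖ := by nlinarith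
      calc Δ = Δ * (1 - γ) * (1 - γ)⁻¹ := by field_simp
        _ ≤ (Fintype.card A * kπ * (1 - γ)⁻¹) * ‖θ₁ - θ₂‖ * (1 - γ)⁻¹ :=
            mul_le_mul_of_nonneg_right h2 (by positivity)
        _ = L * ‖θ₁ - θ₂‖ := by rw [hLdef]; ring
    exact fun s => le_trans (hΔle s) hΔbound
  have hJLip : LipschitzOnWith L.toNNReal J Θ := by
    refine LipschitzOnWith.of_dist_le_mul fun θ₁ h₁ θ₂ h₂ => ?_
    rw [Real.dist_eq, dist_eq_norm, Real.coe_toNNReal L hL0]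
    calc |J θ₁ - J θ₂| = |∑ s, ρ s * (V θ₁ s - V θ₂ s)| := by
          rw [hJ θ₁, hJ θ₂, ← Finset.sum_sub_distrib]
          congr 1
          exact Finset.sum_congr rfl fun s _ => by ring
      _ ≤ ∑ s, |ρ s * (V θ₁ s - V θ₂ s)| := Finset.abs_sum_le_sum_abs _ _
      _ = ∑ s, ρ s * |V θ₁ s - V θ₂ s| := Finset.sum_congr rfl fun s _ => by
          rw [abs_mul, abs_of_nonneg (hρ0 s)]
      _ ≤ ∑ s, ρ s * (L * ‖θ₁ - θ₂‖) := Finset.sum_le_sum fun s _ =>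
          mul_le_mul_of_nonneg_left (hVLip θ₁ h₁ θ₂ h₂ s) (hρ0 s)
      _ = L * ‖θ₁ - θ₂‖ := by rw [← Finset.sum_mul, hρ1, one_mul]
  constructor
  · -- almost-everywhere differentiability
    obtain ⟨F, hFlip, hFeq⟩ := hJLip.extend_real
    filter_upwards [hFlip.ae_differentiableAt (μ := volume)] with θ hθF hθΘ
    have hev : J =ᶠ[nhds θ] F := by
      filter_upwards [hΘo.mem_nhds hθΘ] with θ' hθ' using hFeq hθ'
    exact hev.differentiableAt_iff.2 hθF
  · -- gradient formula
    intro θ hθ hdiff sθ hsθ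
    have hsup : univ.sup' univ_nonempty (V θ) = V θ sθ :=
      le_antisymm (Finset.sup'_le _ _ fun s _ => hsθ s)
        (Finset.le_sup' (V θ) (Finset.mem_univ sθ))
    set Am : EuclideanSpace ℝ (Fin N) → Matrix S S ℝ := fun θ' =>
      Matrix.of fun s s' =>
        β * pmat (π θ') p s s' + γ * R * (if s' = sθ then 1 else 0) with hAmdef
    have hPm : ∀ θ' s s', pmat (π θ') p s s' = ∑ a, π θ' s a * p s a s' := fun θ' s s' => rfl
    have hPm0 : ∀ θ' ∈ Θ, ∀ s s', 0 ≤ pmat (π θ') p s s' := fun θ' h s s' =>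
      Finset.sum_nonneg fun a _ => mul_nonneg (hπ0 θ' h s a) (hp0 s a s')
    have hPmrow : ∀ θ' ∈ Θ, ∀ s, ∑ s', pmat (π θ') p s s' = 1 := by
      intro θ' h s
      simp only [hPm]
      rw [Finset.sum_comm]
      calc ∑ a, ∑ s', π θ' s a * p s a s'
          = ∑ a, π θ' s a * ∑ s', p s a s' :=
            Finset.sum_congr rfl fun a _ => (Finset.mul_sum _ _ _).symm
        _ = 1 := by
            simp only [hp1, mul_one]
            exact hπ1 θ' h s
    have hA0 : ∀ θ' ∈ Θ, ∀ s s', 0 ≤ Am θ' s s' := by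
      intro θ' h s s'
      refine add_nonneg (mul_nonneg hβ0 (hPm0 θ' h s s')) (mul_nonneg hγR0 ?_)
      split <;> norm_num
    have hArow : ∀ θ' ∈ Θ, ∀ s, ∑ s', Am θ' s s' = γ := by
      intro θ' h s
      simp only [hAmdef, Matrix.of_apply]
      rw [Finset.sum_add_distrib, ← Finset.mul_sum, hPmrow θ' h s, ← Finset.mul_sum]
      rw [Finset.sum_ite_eq' univ sθ (fun _ => (1:ℝ))]
      simp [hβR]
    set Mi : EuclideanSpace ℝ (Fin N) → Matrix S S ℝ := fun θ' => StmtAux.nmat (Am θ')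
      with hMidef
    have hMi0 : ∀ θ' ∈ Θ, ∀ s s', 0 ≤ Mi θ' s s' := fun θ' h s s' =>
      StmtAux.nmat_nonneg (hA0 θ' h) (hArow θ' h) s s'
    have hMile : ∀ θ' ∈ Θ, ∀ s s', Mi θ' s s' ≤ (1 - γ)⁻¹ :=
      fun θ' h s s' => StmtAux.nmat_le (hA0 θ' h) (hArow θ' h) hγ1 s s'
    have hMul1 : ∀ θ' ∈ Θ, (1 - Am θ') * Mi θ' = 1 :=
      fun θ' h => StmtAux.one_sub_mul_nmat (hA0 θ' h) (hArow θ' h) hγ1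
    have hMul2 : ∀ θ' ∈ Θ, Mi θ' * (1 - Am θ') = 1 :=
      fun θ' h => StmtAux.nmat_mul_one_sub (hA0 θ' h) (hArow θ' h) hγ1
    set cv : EuclideanSpace ℝ (Fin N) → S → ℝ := fun θ' s => ∑ a, π θ' s a * c s a with hcvdef
    set vf : EuclideanSpace ℝ (Fin N) → S → ℝ := fun θ' => (Mi θ').mulVec (cv θ') with hvfdef
    set gf : EuclideanSpace ℝ (Fin N) → ℝ := fun θ' => ∑ s, ρ s * vf θ' s with hgfdef
    -- the Bellman fixed point equation in matrix form, for any state maximising at `θ'`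
    have hfixgen : ∀ θ' ∈ Θ, ∀ s,
        ((1 - Am θ').mulVec (V θ')) s
          = cv θ' s + γ * R * (univ.sup' univ_nonempty (V θ') - V θ' sθ) := by
      intro θ' h s
      rw [StmtAux.one_sub_mulVec]
      have hAV : ∑ s', Am θ' s s' * V θ' s'
          = β * ∑ a, π θ' s a * ∑ s', p s a s' * V θ' s' + γ * R * V θ' sθ := by
        simp only [hAmdef, Matrix.of_apply, add_mul]
        rw [Finset.sum_add_distrib]
        congr 1
        · calc ∑ s', β * pmat (π θ') p s s' * V θ' s'
              = β * ∑ s', pmat (π θ') p s s' * V θ' s' := by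
                rw [Finset.mul_sum]
                exact Finset.sum_congr rfl fun s' _ => by ring
            _ = β * ∑ a, π θ' s a * ∑ s', p s a s' * V θ' s' := by
                congr 1
                calc ∑ s', pmat (π θ') p s s' * V θ' s'
                    = ∑ s', ∑ a, π θ' s a * p s a s' * V θ' s' := by
                      refine Finset.sum_congr rfl fun s' _ => ?_
                      rw [hPm, Finset.sum_mul]
                  _ = ∑ a, ∑ s', π θ' s a * p s a s' * V θ' s' := Finset.sum_comm
                  _ = ∑ a, π θ' s a * ∑ s', p s a s' * V θ' s' := by
                      refine Finset.sum_congr rfl fun a _ => ?_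
                      rw [Finset.mul_sum]
                      exact Finset.sum_congr rfl fun s' _ => by ring
        · calc ∑ s', γ * R * (if s' = sθ then 1 else 0) * V θ' s'
              = ∑ s', (if s' = sθ then γ * R * V θ' s' else 0) := by
                refine Finset.sum_congr rfl fun s' _ => ?_
                split <;> simp
            _ = γ * R * V θ' sθ := by rw [Finset.sum_ite_eq' univ sθ]; simp
      rw [hAV, hV θ' h s]
      have hexp : ∑ a, π θ' s a * (c s a + β * ∑ s', p s a s' * V θ' s'
            + γ * R * univ.sup' univ_nonempty (V θ'))
          = cv θ' s + β * ∑ a, π θ' s a * ∑ s', p s a s' * V θ' s'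
            + γ * R * univ.sup' univ_nonempty (V θ') := by
        simp only [hcvdef, mul_add, Finset.sum_add_distrib]
        congr 1
        · congr 1
          rw [Finset.mul_sum]
          exact Finset.sum_congr rfl fun a _ => by ring
        · rw [← Finset.sum_mul, hπ1 θ' h s, one_mul, mul_comm]
      rw [hexp]
      ring
    have hVfix : (1 - Am θ).mulVec (V θ) = cv θ := by
      funext s
      rw [hfixgen θ hθ s, hsup]
      ring
    have hVeq : V θ = vf θ :=
      StmtAux.nmat_solve (hA0 θ hθ) (hArow θ hθ) hγ1 hVfix
    -- domination: vf ≤ V on Θ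
    have hvle : ∀ θ' ∈ Θ, ∀ s, vf θ' s ≤ V θ' s := by
      intro θ' h s
      set r : S → ℝ := fun _ => γ * R * (univ.sup' univ_nonempty (V θ') - V θ' sθ) with hrdef
      have hr0 : ∀ s'' : S, 0 ≤ r s'' := by
        intro s''
        have hge := Finset.le_sup' (V θ') (Finset.mem_univ sθ)
        exact mul_nonneg hγR0 (by linarith)
      have hVsolve : V θ' = (Mi θ').mulVec (fun s'' => cv θ' s'' + r s'') := by
        refine StmtAux.nmat_solve (hA0 θ' h) (hArow θ' h) hγ1 ?_
        funext s''
        rw [hfixgen θ' h s'']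
      have h1 : V θ' s = ∑ s'', Mi θ' s s'' * (cv θ' s'' + r s'') := by
        rw [hVsolve]; exact StmtAux.mulVec_apply _ _ _
      have h2 : vf θ' s = ∑ s'', Mi θ' s s'' * cv θ' s'' := StmtAux.mulVec_apply _ _ _
      rw [h1, h2]
      refine Finset.sum_le_sum fun s'' _ => ?_
      rw [mul_add]
      linarith [mul_nonneg (hMi0 θ' h s s'') (hr0 s'')]
    -- gradient of the auxiliary function
    set q : S → A → ℝ := fun s a => c s a + β * ∑ s', p s a s' * V θ s' with hqdef
    set w : S → ℝ := fun s'' => ∑ s, ρ s * Mi θ s s'' with hwdef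
    set G : EuclideanSpace ℝ (Fin N) := ∑ s, ∑ a, (w s * q s a) • D θ s a with hGdef
    have hgGrad : HasGradientAt gf G θ := by
      set Ev : EuclideanSpace ℝ (Fin N) → S → ℝ :=
        fun θ' s'' => ∑ a, (π θ' s'' a - π θ s'' a) * q s'' a with hEvdef
      set w' : EuclideanSpace ℝ (Fin N) → S → ℝ :=
        fun θ' s'' => ∑ s, ρ s * Mi θ' s s'' with hw'def
      have hp_le_one : ∀ s a s', p s a s' ≤ 1 := by
        intro s a s'
        have h1 := Finset.single_le_sum (f := fun s' => p s a s')
          (fun i _ => hp0 s a i) (Finset.mem_univ s')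
        rw [hp1] at h1
        exact h1
      set Cq : ℝ := 1 + β * (1 - γ)⁻¹ with hCqdef
      have hCq0 : 0 ≤ Cq := by positivity
      have hqb : ∀ s a, |q s a| ≤ Cq := by
        intro s a
        have hpV : 0 ≤ ∑ s', p s a s' * V θ s' ∧ (∑ s', p s a s' * V θ s') ≤ (1 - γ)⁻¹ := by
          constructor
          · exact Finset.sum_nonneg fun s' _ => mul_nonneg (hp0 s a s') (hVb θ hθ s').1
          · calc ∑ s', p s a s' * V θ s' ≤ ∑ s', p s a s' * (1 - γ)⁻¹ :=
                Finset.sum_le_sum fun s' _ =>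
                  mul_le_mul_of_nonneg_left (hVb θ hθ s').2 (hp0 s a s')
              _ = (1 - γ)⁻¹ := by rw [← Finset.sum_mul, hp1, one_mul]
        have hq_eq : q s a = c s a + β * ∑ s', p s a s' * V θ s' := rfl
        rw [hq_eq, abs_le]
        constructor
        · have h1 := mul_nonneg hβ0 hpV.1
          have h2 := (hc s a).1
          have h3 : (0:ℝ) ≤ Cq := hCq0
          linarith
        · have h1 := mul_le_mul_of_nonneg_left hpV.2 hβ0
          have h2 := (hc s a).2
          rw [hCqdef]
          linarith
      set CE : ℝ := Fintype.card A * (kπ * Cq) with hCEdef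
      have hCE0 : 0 ≤ CE := by positivity
      have hEvb : ∀ θ' ∈ Θ, ∀ s'', |Ev θ' s''| ≤ CE * ‖θ' - θ‖ := by
        intro θ' h s''
        calc |Ev θ' s''| ≤ ∑ a, |(π θ' s'' a - π θ s'' a) * q s'' a| :=
              Finset.abs_sum_le_sum_abs _ _
          _ ≤ ∑ a, (kπ * ‖θ' - θ‖) * Cq := by
              refine Finset.sum_le_sum fun a _ => ?_
              rw [abs_mul]
              exact mul_le_mul (hπLip s'' a θ' h θ hθ) (hqb s'' a) (abs_nonneg _)
                (by positivity)
          _ = CE * ‖θ' - θ‖ := by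
              rw [Finset.sum_const, Finset.card_univ, hCEdef]
              push_cast
              ring
      have hAmdiff : ∀ θ' ∈ Θ, ∀ s s',
          |Am θ' s s' - Am θ s s'| ≤ β * Fintype.card A * kπ * ‖θ' - θ‖ := by
        intro θ' h s s'
        have h1 : Am θ' s s' - Am θ s s' = β * (pmat (π θ') p s s' - pmat (π θ) p s s') := by
          simp only [hAmdef, Matrix.of_apply]
          ring
        have h2 : pmat (π θ') p s s' - pmat (π θ) p s s'
            = ∑ a, (π θ' s a - π θ s a) * p s a s' := by
          rw [hPm, hPm, ← Finset.sum_sub_distrib]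
          exact Finset.sum_congr rfl fun a _ => by ring
        rw [h1, h2, abs_mul, abs_of_nonneg hβ0]
        calc β * |∑ a, (π θ' s a - π θ s a) * p s a s'|
            ≤ β * ∑ a, |(π θ' s a - π θ s a) * p s a s'| :=
              mul_le_mul_of_nonneg_left (Finset.abs_sum_le_sum_abs _ _) hβ0
          _ ≤ β * ∑ a, (kπ * ‖θ' - θ‖) * 1 := by
              refine mul_le_mul_of_nonneg_left (Finset.sum_le_sum fun a _ => ?_) hβ0
              rw [abs_mul]
              refine mul_le_mul (hπLip s a θ' h θ hθ) ?_ (abs_nonneg _) (by positivity)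
              rw [abs_of_nonneg (hp0 s a s')]
              exact hp_le_one s a s'
          _ = β * Fintype.card A * kπ * ‖θ' - θ‖ := by
              rw [Finset.sum_const, Finset.card_univ]
              push_cast
              ring

      have hMib : ∀ θ' ∈ Θ, ∀ s s', |Mi θ' s s'| ≤ (1 - γ)⁻¹ := by
        intro θ' h s s'
        rw [abs_of_nonneg (hMi0 θ' h s s')]
        exact hMile θ' h s s'
      have hresolvent : ∀ θ' ∈ Θ, Mi θ' * (Am θ' - Am θ) * Mi θ = Mi θ' - Mi θ := by
        intro θ' h
        have e : Am θ' - Am θ = (1 - Am θ) - (1 - Am θ') := by abel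
        rw [e, Matrix.mul_sub, Matrix.sub_mul, Matrix.mul_assoc, hMul1 θ hθ, Matrix.mul_one,
          hMul2 θ' h, Matrix.one_mul]
      set CA : ℝ := β * Fintype.card A * kπ with hCAdef
      have hCA0 : 0 ≤ CA := by positivity
      set CM : ℝ := Fintype.card S * Fintype.card S * CA * ((1 - γ)⁻¹ * (1 - γ)⁻¹) with hCMdef
      have hCM0 : 0 ≤ CM := by positivity
      have hMidiff : ∀ θ' ∈ Θ, ∀ s s'', |Mi θ' s s'' - Mi θ s s''| ≤ CM * ‖θ' - θ‖ := by
        intro θ' h s s''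
        have hres := hresolvent θ' h
        have hent : Mi θ' s s'' - Mi θ s s''
            = (Mi θ' * ((Am θ' - Am θ) * Mi θ)) s s'' := by
          rw [← Matrix.mul_assoc, hres]
          simp [Matrix.sub_apply]
        rw [hent]
        have hXY : ∀ u u'', |((Am θ' - Am θ) * Mi θ) u u''|
            ≤ Fintype.card S * (CA * ‖θ' - θ‖) * (1 - γ)⁻¹ := by
          intro u u''
          refine StmtAux.abs_mul_apply_le _ _ _ _ ?_ ?_ u u''
          · intro a b
            have := hAmdiff θ' h a b
            rw [hCAdef]
            calc |Am θ' a b - Am θ a b| ≤ β * Fintype.card A * kπ * ‖θ' - θ‖ := this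
              _ = β * ↑(Fintype.card A) * kπ * ‖θ' - θ‖ := rfl
          · exact hMib θ hθ
        have hmain := StmtAux.abs_mul_apply_le (Mi θ') ((Am θ' - Am θ) * Mi θ)
          ((1 - γ)⁻¹) (Fintype.card S * (CA * ‖θ' - θ‖) * (1 - γ)⁻¹)
          (hMib θ' h) hXY s s''
        refine le_trans hmain (le_of_eq ?_)
        rw [hCMdef]
        ring
      have hw'b : ∀ θ' ∈ Θ, ∀ s'', |w' θ' s'' - w s''| ≤ CM * ‖θ' - θ‖ := by
        intro θ' h s''
        have h1 : w' θ' s'' - w s'' = ∑ s, ρ s * (Mi θ' s s'' - Mi θ s s'') := by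
          rw [hw'def, hwdef, ← Finset.sum_sub_distrib]
          exact Finset.sum_congr rfl fun s _ => by ring
        rw [h1]
        calc |∑ s, ρ s * (Mi θ' s s'' - Mi θ s s'')|
            ≤ ∑ s, |ρ s * (Mi θ' s s'' - Mi θ s s'')| := Finset.abs_sum_le_sum_abs _ _
          _ ≤ ∑ s, ρ s * (CM * ‖θ' - θ‖) := by
              refine Finset.sum_le_sum fun s _ => ?_
              rw [abs_mul, abs_of_nonneg (hρ0 s)]
              exact mul_le_mul_of_nonneg_left (hMidiff θ' h s s'') (hρ0 s)
          _ = CM * ‖θ' - θ‖ := by rw [← Finset.sum_mul, hρ1, one_mul]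
      -- the key difference identity on Θ
      have hvdiff : ∀ θ' ∈ Θ, ∀ s, vf θ' s - vf θ s = ∑ s'', Mi θ' s s'' * Ev θ' s'' := by
        intro θ' h s
        have hi : ∀ u, vf θ' u - ∑ s'', Am θ' u s'' * vf θ' s'' = cv θ' u := by
          intro u
          have h0 : (1 - Am θ').mulVec (vf θ') = cv θ' := by
            show (1 - Am θ').mulVec ((Mi θ').mulVec (cv θ')) = cv θ'
            rw [Matrix.mulVec_mulVec, hMul1 θ' h, Matrix.one_mulVec]
          have h1 := congrFun h0 u
          rwa [StmtAux.one_sub_mulVec] at h1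
        have hii : ∀ u, vf θ u - ∑ s'', Am θ u s'' * vf θ s'' = cv θ u := by
          intro u
          have h1 := congrFun hVfix u
          rw [StmtAux.one_sub_mulVec] at h1
          rw [← hVeq]
          exact h1
        have hkeyent : ∀ u, (vf θ' u - vf θ u)
            - ∑ s'', Am θ' u s'' * (vf θ' s'' - vf θ s'') = Ev θ' u := by
          intro u
          have hsplit : ∑ s'', Am θ' u s'' * (vf θ' s'' - vf θ s'')
              = ∑ s'', Am θ' u s'' * vf θ' s'' - ∑ s'', Am θ' u s'' * vf θ s'' := by
            rw [← Finset.sum_sub_distrib]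
            exact Finset.sum_congr rfl fun s'' _ => by ring
          have hAd : ∑ s'', Am θ' u s'' * vf θ s'' - ∑ s'', Am θ u s'' * vf θ s''
              = β * ∑ a, (π θ' u a - π θ u a) * ∑ s'', p u a s'' * vf θ s'' := by
            rw [← Finset.sum_sub_distrib]
            have lhs_eq : ∑ s'', (Am θ' u s'' * vf θ s'' - Am θ u s'' * vf θ s'')
                = ∑ s'', ∑ a, β * ((π θ' u a - π θ u a) * p u a s'' * vf θ s'') := by
              refine Finset.sum_congr rfl fun s'' _ => ?_
              have g1 : Am θ' u s'' - Am θ u s''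
                  = β * (pmat (π θ') p u s'' - pmat (π θ) p u s'') := by
                simp only [hAmdef, Matrix.of_apply]
                ring
              have g2 : pmat (π θ') p u s'' - pmat (π θ) p u s''
                  = ∑ a, (π θ' u a - π θ u a) * p u a s'' := by
                rw [hPm, hPm, ← Finset.sum_sub_distrib]
                exact Finset.sum_congr rfl fun a _ => by ring
              have g3 : Am θ' u s'' * vf θ s'' - Am θ u s'' * vf θ s''
                  = (β * ∑ a, (π θ' u a - π θ u a) * p u a s'') * vf θ s'' := by
                rw [← g2, ← g1]
                ring
              rw [g3, Finset.mul_sum, Finset.sum_mul]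
              exact Finset.sum_congr rfl fun a _ => by ring
            have rhs_eq : β * ∑ a, (π θ' u a - π θ u a) * ∑ s'', p u a s'' * vf θ s''
                = ∑ a, ∑ s'', β * ((π θ' u a - π θ u a) * p u a s'' * vf θ s'') := by
              rw [Finset.mul_sum]
              refine Finset.sum_congr rfl fun a _ => ?_
              rw [Finset.mul_sum, Finset.mul_sum]
              exact Finset.sum_congr rfl fun s'' _ => by ring
            rw [lhs_eq, rhs_eq, Finset.sum_comm]
          have hcvd : cv θ' u - cv θ u = ∑ a, (π θ' u a - π θ u a) * c u a := by
            simp only [hcvdef]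
            rw [← Finset.sum_sub_distrib]
            exact Finset.sum_congr rfl fun a _ => by ring
          have hEvx : Ev θ' u = ∑ a, (π θ' u a - π θ u a) * c u a
              + β * ∑ a, (π θ' u a - π θ u a) * ∑ s'', p u a s'' * vf θ s'' := by
            have hq_eq : ∀ a, q u a = c u a + β * ∑ s'', p u a s'' * vf θ s'' := by
              intro a
              have : q u a = c u a + β * ∑ s'', p u a s'' * V θ s'' := rfl
              rw [this, hVeq]
            have hEv_eq : Ev θ' u = ∑ a, (π θ' u a - π θ u a) * q u a := rfl
            rw [hEv_eq, Finset.mul_sum, ← Finset.sum_add_distrib]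
            refine Finset.sum_congr rfl fun a _ => ?_
            rw [hq_eq a]
            ring
          rw [hsplit, hEvx]
          linarith [hi u, hii u, hAd, hcvd]
        have hEq : (1 - Am θ').mulVec (fun u => vf θ' u - vf θ u) = Ev θ' := by
          funext u
          rw [StmtAux.one_sub_mulVec]
          exact hkeyent u
        have hsolve := StmtAux.nmat_solve (hA0 θ' h) (hArow θ' h) hγ1 hEq
        have h1 := congrFun hsolve s
        rw [StmtAux.mulVec_apply] at h1
        exact h1
      -- difference of the objective
      have hgid : ∀ θ' ∈ Θ, gf θ' - gf θ = ∑ s'', w' θ' s'' * Ev θ' s'' := by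
        intro θ' h
        have h0 : gf θ' - gf θ = ∑ s, ρ s * (vf θ' s - vf θ s) := by
          have : gf θ' = ∑ s, ρ s * vf θ' s := rfl
          have h2 : gf θ = ∑ s, ρ s * vf θ s := rfl
          rw [this, h2, ← Finset.sum_sub_distrib]
          exact Finset.sum_congr rfl fun s _ => by ring
        calc gf θ' - gf θ = ∑ s, ρ s * (vf θ' s - vf θ s) := h0
          _ = ∑ s, ρ s * ∑ s'', Mi θ' s s'' * Ev θ' s'' :=
              Finset.sum_congr rfl fun s _ => by rw [hvdiff θ' h s]
          _ = ∑ s, ∑ s'', ρ s * (Mi θ' s s'' * Ev θ' s'') :=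
              Finset.sum_congr rfl fun s _ => Finset.mul_sum _ _ _
          _ = ∑ s'', ∑ s, ρ s * (Mi θ' s s'' * Ev θ' s'') := Finset.sum_comm
          _ = ∑ s'', w' θ' s'' * Ev θ' s'' := by
              refine Finset.sum_congr rfl fun s'' _ => ?_
              have : w' θ' s'' = ∑ s, ρ s * Mi θ' s s'' := rfl
              rw [this, Finset.sum_mul]
              exact Finset.sum_congr rfl fun s _ => by ring
      -- inner-product expansion of G
      have hGinner : ∀ u : EuclideanSpace ℝ (Fin N),
          ⟪G, u⟫ = ∑ s'', ∑ a, (w s'' * q s'' a) * ⟪D θ s'' a, u⟫ := by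
        intro u
        rw [hGdef, sum_inner]
        refine Finset.sum_congr rfl fun s'' _ => ?_
        rw [sum_inner]
        refine Finset.sum_congr rfl fun a _ => ?_
        rw [real_inner_smul_left]
      -- littleo of the linearisation error
      have hA : (fun θ' => ∑ s'', ∑ a, (w s'' * q s'' a)
          * (π θ' s'' a - π θ s'' a - ⟪D θ s'' a, θ' - θ⟫))
          =o[nhds θ] fun θ' => θ' - θ := by
        refine Asymptotics.IsLittleO.fun_sum fun s'' _ => ?_
        refine Asymptotics.IsLittleO.fun_sum fun a _ => ?_
        have hbase := (hD θ hθ s'' a).hasFDerivAt.isLittleO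
        have hbase' : (fun θ' => π θ' s'' a - π θ s'' a - ⟪D θ s'' a, θ' - θ⟫)
            =o[nhds θ] fun θ' => θ' - θ := by
          refine hbase.congr_left fun θ' => ?_
          rw [InnerProductSpace.toDual_apply_apply]
        exact hbase'.const_mul_left _
      -- littleo of the second-order term
      have hB : (fun θ' => ∑ s'', (w' θ' s'' - w s'') * Ev θ' s'')
          =o[nhds θ] fun θ' => θ' - θ := by
        rw [Asymptotics.isLittleO_iff]
        intro ε hε
        set K : ℝ := Fintype.card S * CM * CE with hKdef
        have hK0 : 0 ≤ K := by positivity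
        have hK1 : (0:ℝ) < K + 1 := by linarith
        filter_upwards [hΘo.mem_nhds hθ, Metric.ball_mem_nhds θ (div_pos hε hK1)]
          with θ' hΘ' hball
        have hn : ‖θ' - θ‖ < ε / (K + 1) := by
          rw [← dist_eq_norm]
          exact Metric.mem_ball.1 hball
        have hbound : ‖∑ s'', (w' θ' s'' - w s'') * Ev θ' s''‖
            ≤ K * (‖θ' - θ‖ * ‖θ' - θ‖) := by
          rw [Real.norm_eq_abs]
          calc |∑ s'', (w' θ' s'' - w s'') * Ev θ' s''|
              ≤ ∑ s'', |(w' θ' s'' - w s'') * Ev θ' s''| := Finset.abs_sum_le_sum_abs _ _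
            _ ≤ ∑ _s'' : S, (CM * ‖θ' - θ‖) * (CE * ‖θ' - θ‖) := by
                refine Finset.sum_le_sum fun s'' _ => ?_
                rw [abs_mul]
                exact mul_le_mul (hw'b θ' hΘ' s'') (hEvb θ' hΘ' s'') (abs_nonneg _)
                  (by positivity)
            _ = K * (‖θ' - θ‖ * ‖θ' - θ‖) := by
                rw [Finset.sum_const, Finset.card_univ, hKdef]
                push_cast
                ring
        rw [Real.norm_eq_abs] at hbound ⊢
        calc |∑ s'', (w' θ' s'' - w s'') * Ev θ' s''| ≤ K * (‖θ' - θ‖ * ‖θ' - θ‖) := hbound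
          _ ≤ ε * ‖θ' - θ‖ := by
              have hKn : ‖θ' - θ‖ * (K + 1) < ε := (lt_div_iff₀ hK1).1 hn
              nlinarith [norm_nonneg (θ' - θ), hK0]
      -- assemble
      rw [hasGradientAt_iff_hasFDerivAt]
      refine HasFDerivAt.of_isLittleO ?_
      have hAB := hA.add hB
      refine hAB.congr' ?_ Filter.EventuallyEq.rfl
      filter_upwards [hΘo.mem_nhds hθ] with θ' h'
      have h1 := hgid θ' h'
      have h2 := hGinner (θ' - θ)
      have h5 : (InnerProductSpace.toDual ℝ (EuclideanSpace ℝ (Fin N)) G) (θ' - θ)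
          = ⟪G, θ' - θ⟫ := InnerProductSpace.toDual_apply_apply
      have h3 : ∑ s'', ∑ a, (w s'' * q s'' a)
            * (π θ' s'' a - π θ s'' a - ⟪D θ s'' a, θ' - θ⟫)
          = (∑ s'', w s'' * Ev θ' s'')
            - ∑ s'', ∑ a, (w s'' * q s'' a) * ⟪D θ s'' a, θ' - θ⟫ := by
        rw [← Finset.sum_sub_distrib]
        refine Finset.sum_congr rfl fun s'' _ => ?_
        have hEv_eq : Ev θ' s'' = ∑ a, (π θ' s'' a - π θ s'' a) * q s'' a := rfl
        rw [hEv_eq, Finset.mul_sum, ← Finset.sum_sub_distrib]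
        exact Finset.sum_congr rfl fun a _ => by ring
      have h4 : ∑ s'', w' θ' s'' * Ev θ' s''
          = ∑ s'', w s'' * Ev θ' s'' + ∑ s'', (w' θ' s'' - w s'') * Ev θ' s'' := by
        rw [← Finset.sum_add_distrib]
        exact Finset.sum_congr rfl fun s'' _ => by ring
      show ∑ s'', ∑ a, (w s'' * q s'' a)
            * (π θ' s'' a - π θ s'' a - ⟪D θ s'' a, θ' - θ⟫)
          + ∑ s'', (w' θ' s'' - w s'') * Ev θ' s''
          = gf θ' - gf θ - (InnerProductSpace.toDual ℝ (EuclideanSpace ℝ (Fin N)) G) (θ' - θ)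
      rw [h3, h5]
      linarith [h1, h2, h4]



    -- identification of the gradient
    have hgdiff : DifferentiableAt ℝ gf θ := hgGrad.hasFDerivAt.differentiableAt
    have hgfθ : gf θ = J θ := by
      rw [hgfdef, hJ θ]
      exact Finset.sum_congr rfl fun s _ => by rw [← hVeq]
    have hmin : IsLocalMin (fun θ' => J θ' - gf θ') θ := by
      have h0 : J θ - gf θ = 0 := by rw [hgfθ]; ring
      filter_upwards [hΘo.mem_nhds hθ] with θ' hθ'
      have : gf θ' ≤ J θ' := by
        rw [hgfdef, hJ θ']
        exact Finset.sum_le_sum fun s _ =>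
          mul_le_mul_of_nonneg_left (hvle θ' hθ' s) (hρ0 s)
      simp only [h0]
      linarith
    have hfd0 : fderiv ℝ (fun θ' => J θ' - gf θ') θ = 0 := hmin.fderiv_eq_zero
    have hfdeq : fderiv ℝ J θ = fderiv ℝ gf θ := by
      have hsub := fderiv_fun_sub hdiff hgdiff
      rw [hfd0] at hsub
      have := hsub.symm
      rwa [sub_eq_zero] at this
    have hgradeq : gradient J θ = G := by
      rw [gradient, hfdeq, ← gradient, hgGrad.gradient]
    rw [hgradeq]
    -- finally, identify G with the claimed formula
    have hDsum : ∀ s, ∑ a, D θ s a = 0 := by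
      intro s
      have h1 : HasFDerivAt (fun θ' => ∑ a, π θ' s a)
          (∑ a, (InnerProductSpace.toDual ℝ (EuclideanSpace ℝ (Fin N))) (D θ s a)) θ :=
        HasFDerivAt.fun_sum fun a _ => (hD θ hθ s a).hasFDerivAt
      have h2 : HasFDerivAt (fun θ' => ∑ a, π θ' s a)
          (0 : EuclideanSpace ℝ (Fin N) →L[ℝ] ℝ) θ := by
        have hconst : HasFDerivAt (fun _ : EuclideanSpace ℝ (Fin N) => (1:ℝ))
            (0 : EuclideanSpace ℝ (Fin N) →L[ℝ] ℝ) θ := hasFDerivAt_const _ _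
        refine hconst.congr_of_eventuallyEq ?_
        filter_upwards [hΘo.mem_nhds hθ] with θ' hθ' using hπ1 θ' hθ' s
      have h3 := h1.unique h2
      rw [← map_sum] at h3
      have h4 := congrArg (InnerProductSpace.toDual ℝ (EuclideanSpace ℝ (Fin N))).symm h3
      rwa [LinearIsometryEquiv.symm_apply_apply, map_zero] at h4
    set B : Matrix S S ℝ := β • pmat (π θ) p with hBdef
    have hB0 : ∀ s s', 0 ≤ B s s' := fun s s' =>
      mul_nonneg hβ0 (hPm0 θ hθ s s')
    have hBrow : ∀ s, ∑ s', B s s' = β := by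
      intro s
      simp only [hBdef, Matrix.smul_apply, smul_eq_mul]
      rw [← Finset.mul_sum, hPmrow θ hθ s, mul_one]
    set MP : Matrix S S ℝ := StmtAux.nmat B with hMPdef
    have hdv : ∀ s₀ s, dvisit γ R (π θ) p s₀ s = (1 - β) * MP s₀ s := by
      intro s₀ s
      have h1 : (1:ℝ) - γ + γ * R = 1 - β := by rw [hβdef]; ring
      have h2 : MP s₀ s = ∑' t : ℕ, (γ * (1 - R)) ^ t * ((pmat (π θ) p) ^ t) s₀ s := by
        simp only [hMPdef, StmtAux.nmat, Matrix.of_apply]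
        refine tsum_congr fun t => ?_
        rw [hBdef, smul_pow, Matrix.smul_apply, smul_eq_mul, hβdef]
      rw [dvisit, h1, h2]
    -- Sherman–Morrison identity
    set k : ℝ := γ * R / (1 - γ) with hkdef
    have hSM : Mi θ = Matrix.of fun s s' => MP s s' + k * MP sθ s' := by
      refine (StmtAux.eq_nmat (hA0 θ hθ) (hArow θ hθ) hγ1 ?_).symm
      ext s s'
      rw [Matrix.mul_apply]
      have h1MP : ∀ u u', ∑ u'', (1 - B) u u'' * MP u'' u' = (1 : Matrix S S ℝ) u u' := by
        intro u u'
        calc ∑ u'', (1 - B) u u'' * MP u'' u' = ((1 - B) * MP) u u' :=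
              (Matrix.mul_apply).symm
          _ = (1 : Matrix S S ℝ) u u' := by rw [StmtAux.one_sub_mul_nmat hB0 hBrow hβ1]
      have hent : ∀ s'', (1 - Am θ) s s'' =
          (1 - B) s s'' - γ * R * (if s'' = sθ then 1 else 0) := by
        intro s''
        simp only [Matrix.sub_apply, hAmdef, Matrix.of_apply, hBdef, Matrix.smul_apply,
          smul_eq_mul]
        ring
      calc ∑ s'', (1 - Am θ) s s'' * (Matrix.of fun u u' => MP u u' + k * MP sθ u') s'' s'
          = ∑ s'', ((1 - B) s s'' * MP s'' s'
              + k * MP sθ s' * (1 - B) s s''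
              - γ * R * (if s'' = sθ then 1 else 0) * (MP s'' s' + k * MP sθ s')) := by
            refine Finset.sum_congr rfl fun s'' _ => ?_
            rw [hent s'']
            simp only [Matrix.of_apply]
            ring
        _ = (1 : Matrix S S ℝ) s s' + k * MP sθ s' * (1 - β)
            - γ * R * (MP sθ s' + k * MP sθ s') := by
            rw [Finset.sum_sub_distrib, Finset.sum_add_distrib, h1MP s s', ← Finset.mul_sum]
            have hrowB : ∑ s'', (1 - B) s s'' = 1 - β := by
              simp only [Matrix.sub_apply, Finset.sum_sub_distrib, hBrow s]
              congr 1
              simp [Matrix.one_apply]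
            rw [hrowB]
            congr 1
            calc ∑ s'', γ * R * (if s'' = sθ then 1 else 0) * (MP s'' s' + k * MP sθ s')
                = ∑ s'', (if s'' = sθ then γ * R * (MP s'' s' + k * MP sθ s') else 0) := by
                  refine Finset.sum_congr rfl fun s'' _ => ?_
                  split <;> simp
              _ = γ * R * (MP sθ s' + k * MP sθ s') := by
                  rw [Finset.sum_ite_eq' univ sθ]
                  simp
        _ = (1 : Matrix S S ℝ) s s' := by
            have hkγ : k * (1 - γ) = γ * R := by
              rw [hkdef]; field_simp
            have hz : k * MP sθ s' * (1 - β) - γ * R * (MP sθ s' + k * MP sθ s') = 0 := by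
              have hb : (1:ℝ) - β = (1 - γ) + γ * R := by rw [hβdef]; ring
              rw [hb]
              linear_combination MP sθ s' * hkγ
            linarith [hz]
    -- expression of the weights via `dvisit`
    set c₁ : ℝ := γ * R / ((1 - γ) * (1 - γ + γ * R)) with hc₁def
    set c₂ : ℝ := 1 / (1 - γ + γ * R) with hc₂def
    have h1βR : (1:ℝ) - γ + γ * R = 1 - β := by rw [hβdef]; ring
    have hw : ∀ s, w s = c₁ * dvisit γ R (π θ) p sθ s
        + c₂ * (∑ s₀, ρ s₀ * dvisit γ R (π θ) p s₀ s) := by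
      intro s
      have h1 : w s = ∑ s₀, ρ s₀ * (MP s₀ s + k * MP sθ s) := by
        rw [hwdef]
        refine Finset.sum_congr rfl fun s₀ _ => ?_
        rw [hSM]
        simp only [Matrix.of_apply]
      have h2 : ∑ s₀, ρ s₀ * (MP s₀ s + k * MP sθ s)
          = (∑ s₀, ρ s₀ * MP s₀ s) + k * MP sθ s := by
        calc ∑ s₀, ρ s₀ * (MP s₀ s + k * MP sθ s)
            = ∑ s₀, (ρ s₀ * MP s₀ s + ρ s₀ * (k * MP sθ s)) :=
              Finset.sum_congr rfl fun s₀ _ => by ring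
          _ = (∑ s₀, ρ s₀ * MP s₀ s) + ∑ s₀, ρ s₀ * (k * MP sθ s) := Finset.sum_add_distrib
          _ = (∑ s₀, ρ s₀ * MP s₀ s) + k * MP sθ s := by
              rw [← Finset.sum_mul, hρ1, one_mul]
      have h3 : c₁ * dvisit γ R (π θ) p sθ s = k * MP sθ s := by
        rw [hdv, hc₁def, hkdef, h1βR]
        field_simp
      have h4 : c₂ * (∑ s₀, ρ s₀ * dvisit γ R (π θ) p s₀ s) = ∑ s₀, ρ s₀ * MP s₀ s := by
        rw [hc₂def, h1βR, Finset.mul_sum]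
        refine Finset.sum_congr rfl fun s₀ _ => ?_
        rw [hdv]
        field_simp
      rw [h1, h2, h3, h4]
      ring
    -- replace `q` by `Q` and split the sum
    have hQq : ∀ s a, Q θ s a = q s a + γ * R * V θ sθ := by
      intro s a
      rw [hQ θ hθ s a, hsup, hqdef]
    have hstep1 : ∀ s, ∑ a, (w s * q s a) • D θ s a = ∑ a, (w s * Q θ s a) • D θ s a := by
      intro s
      have h1 : ∑ a, (w s * Q θ s a) • D θ s a
          = ∑ a, ((w s * q s a) • D θ s a + (w s * (γ * R * V θ sθ)) • D θ s a) := by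
        refine Finset.sum_congr rfl fun a _ => ?_
        rw [hQq s a, mul_add, add_smul]
      rw [h1, Finset.sum_add_distrib, ← Finset.smul_sum, hDsum s, smul_zero, add_zero]
    rw [hGdef]
    calc ∑ s, ∑ a, (w s * q s a) • D θ s a
        = ∑ s, ∑ a, (w s * Q θ s a) • D θ s a :=
          Finset.sum_congr rfl fun s _ => hstep1 s
      _ = ∑ s, (c₁ • ∑ a, (dvisit γ R (π θ) p sθ s * Q θ s a) • D θ s a
            + c₂ • ∑ a, ((∑ s₀, ρ s₀ * dvisit γ R (π θ) p s₀ s) * Q θ s a) • D θ s a) := by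
          refine Finset.sum_congr rfl fun s _ => ?_
          rw [Finset.smul_sum, Finset.smul_sum, ← Finset.sum_add_distrib]
          refine Finset.sum_congr rfl fun a _ => ?_
          rw [smul_smul, smul_smul, ← add_smul, hw s]
          congr 1
          ring
      _ = c₁ • (∑ s, ∑ a, (dvisit γ R (π θ) p sθ s * Q θ s a) • D θ s a)
          + c₂ • ∑ s, ∑ a, ((∑ s₀, ρ s₀ * dvisit γ R (π θ) p s₀ s) * Q θ s a) • D θ s a := by
          rw [Finset.sum_add_distrib, Finset.smul_sum, Finset.smul_sum]
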